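/- Let n ≥ 2. Let ξ = (ξ̲, ξ₀) ∈ ℝⁿ × ℝ with ξ₀ ≠ 1, and set θ = ξ̲/(1 − ξ₀), η = (1 + ξ₀)/(2(1 − ξ₀)), and V(x) = |x|²/2 − ⟨x, θ⟩ + η for x ∈ ℝⁿ. Let c^S = (c̲, c₀) ∈ ℝⁿ × ℝ and k^S ∈ ℝ satisfy ⟨c^S, ξ⟩ + k^S = 0, and define c^R = c̲ and k^R = k^S + c₀. Then every x ∈ ℝⁿ satisfying k^R·|x|² + 2⟨c^R, x⟩ + 2k^S − k^R = 0 satisfies ⟨x − θ, c^R + k^R·x⟩ = k^R·V(x). (Since the gradient of V at x is x − θ and c^R + k^R·x is the normal direction of the interface sphere at x, this says that the normal derivative of V equals k^R·V on the interface, i.e. V satisfies the conformal boundary condition.) -/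

import Mathlib

open scoped RealInnerProductSpace

/-- The Minkowski inner product on `ℝⁿ × ℝ ≅ ℝ^{n,1}`:
`⟨x, y⟩₁ = ⟨x̲, y̲⟩ - x₀ y₀`. -/
noncomputable def minkInner {n : ℕ} (x y : EuclideanSpace ℝ (Fin n) × ℝ) : ℝ :=
  ⟪x.1, y.1⟫ - x.2 * y.2

/-- The Euclidean inner product on `ℝⁿ × ℝ ≅ ℝ^{n+1}`. -/
noncomputable def euclInner {n : ℕ} (x y : EuclideanSpace ℝ (Fin n) × ℝ) : ℝ :=
  ⟪x.1, y.1⟫ + x.2 * y.2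

/-- The hyperboloid model of hyperbolic space:
`ℍⁿ = {y : ⟨y,y⟩₁ = -1, y₀ > 0}`. -/
noncomputable def Hyperboloid (n : ℕ) : Set (EuclideanSpace ℝ (Fin n) × ℝ) :=
  {y | minkInner y y = -1 ∧ 0 < y.2}

/-- The stereographic projection `π_ℍ(y) = (y̲, 1)/y₀`. -/
noncomputable def stereoH {n : ℕ} (y : EuclideanSpace ℝ (Fin n) × ℝ) :
    EuclideanSpace ℝ (Fin n) × ℝ := (y.2⁻¹ • y.1, y.2⁻¹)

/-- The unit sphere `Sⁿ ⊂ ℝⁿ × ℝ ≅ ℝ^{n+1}` (described via the squared norm). -/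
noncomputable def UnitSphere (n : ℕ) : Set (EuclideanSpace ℝ (Fin n) × ℝ) :=
  {p | ‖p.1‖ ^ 2 + p.2 ^ 2 = 1}

/-- The stereographic projection
`π_ℝ(x) = (2x/(|x|²+1), (|x|²−1)/(|x|²+1))`. -/
noncomputable def stereoR {n : ℕ} (x : EuclideanSpace ℝ (Fin n)) :
    EuclideanSpace ℝ (Fin n) × ℝ :=
  ((‖x‖ ^ 2 + 1)⁻¹ • ((2 : ℝ) • x), (‖x‖ ^ 2 - 1) / (‖x‖ ^ 2 + 1))

/-- with `θ = ξ̲/(1-ξ₀)`, `η = (1+ξ₀)/(2(1-ξ₀))`,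
`V(x) = |x|²/2 - ⟨x,θ⟩ + η`, `c^R = c̲`, `k^R = k^S + c₀`, if `⟨c^S,ξ⟩ + k^S = 0`
then every `x` with `k^R |x|² + 2⟨c^R,x⟩ + 2k^S - k^R = 0` satisfies
`⟨x - θ, c^R + k^R x⟩ = k^R V(x)` (the conformal boundary condition for `V`). -/
theorem statement10 (n : ℕ) (hn : 2 ≤ n)
    (xi : EuclideanSpace ℝ (Fin n)) (xi0 : ℝ) (hxi : xi0 ≠ 1)
    (c : EuclideanSpace ℝ (Fin n)) (c0 kS : ℝ)
    (hflat : euclInner (c, c0) (xi, xi0) + kS = 0)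
    (x : EuclideanSpace ℝ (Fin n))
    (hx : (kS + c0) * ‖x‖ ^ 2 + 2 * ⟪c, x⟫ + 2 * kS - (kS + c0) = 0) :
    ⟪x - (1 - xi0)⁻¹ • xi, c + (kS + c0) • x⟫
      = (kS + c0) * (‖x‖ ^ 2 / 2 - ⟪x, (1 - xi0)⁻¹ • xi⟫
          + (1 + xi0) / (2 * (1 - xi0))) := by
  simp only [euclInner] at hflat
  have h1 : (1 : ℝ) - xi0 ≠ 0 := sub_ne_zero.2 (Ne.symm hxi)
  simp only [inner_sub_left, inner_add_right, inner_smul_left, inner_smul_right,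
    real_inner_self_eq_norm_sq, RCLike.ofReal_real_eq_id, id_eq, conj_trivial]
  rw [real_inner_comm xi c] at hflat
  rw [real_inner_comm x c] at hx
  rw [real_inner_comm xi x]
  set A : ℝ := ⟪x, c⟫
  set B : ℝ := ⟪xi, c⟫
  set C : ℝ := ⟪xi, x⟫
  field_simp
  linear_combination (1 - xi0) * hx - 2 * hflat
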